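/- Let S = ⟨n_1,n_2,n_3⟩ be a numerical semigroup minimally generated by n_1 < n_2 < n_3 with gcd(n_1,n_2,n_3)=1 which is not symmetric, with c_i and r_{i,j} as in the standard setup, and let T(S) = {g_1, g_2} with g_1 = g(S). (i) If g_1 = (c_2−1)n_2 + (r_{1,3}−1)n_3 − n_1, then r_{1,3}n_3 − r_{3,1}n_1 = r_{2,1}n_1 − r_{1,2}n_2 = r_{3,2}n_2 − r_{2,3}n_3 = g_1 − g_2. (ii) If g_1 = (c_3−1)n_3 + (r_{1,2}−1)n_2 − n_1, then r_{3,1}n_1 − r_{1,3}n_3 = r_{1,2}n_2 − r_{2,1}n_1 = r_{2,3}n_3 − r_{3,2}n_2 = g_1 − g_2. -/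

import Mathlib

/-- Membership of an integer in an additive submonoid of `ℕ`, viewed inside `ℤ`
via the inclusion `ℕ ⊆ ℤ`. -/
def AddSubmonoid.zmem (S : AddSubmonoid ℕ) (x : ℤ) : Prop :=
  ∃ n : ℕ, n ∈ S ∧ (n : ℤ) = x

/-- The Frobenius number `g(S) = max {x ∈ ℤ : x ∉ S}` of a numerical semigroup. -/
noncomputable def frobeniusNumber (S : AddSubmonoid ℕ) : ℤ :=
  sSup {x : ℤ | ¬ S.zmem x}

/-- The set of pseudo-Frobenius numbers
`T(S) = {x ∈ ℤ \ S : x + s ∈ S for all s ∈ S, s ≠ 0}`. -/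
def pseudoFrobeniusSet (S : AddSubmonoid ℕ) : Set ℤ :=
  {x : ℤ | ¬ S.zmem x ∧ ∀ s ∈ S, s ≠ 0 → S.zmem (x + s)}


namespace Stmt12Aux

lemma mem_pair (a b x y : ℕ) : x * a + y * b ∈ AddSubmonoid.closure ({a, b} : Set ℕ) := by
  rw [AddSubmonoid.mem_closure_pair]
  exact ⟨x, y, by simp [nsmul_eq_mul]⟩

lemma mem_triple_iff (a b c m : ℕ) :
    m ∈ AddSubmonoid.closure ({a, b, c} : Set ℕ) ↔
      ∃ x y z : ℕ, m = x * a + y * b + z * c := by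
  constructor
  · intro hm
    induction hm using AddSubmonoid.closure_induction with
    | mem x hx =>
      rcases hx with h | h | h
      · exact ⟨1, 0, 0, by simp [h]⟩
      · exact ⟨0, 1, 0, by simp [h]⟩
      · simp only [Set.mem_singleton_iff] at h; exact ⟨0, 0, 1, by simp [h]⟩
    | zero => exact ⟨0, 0, 0, by simp⟩
    | add x y hx hy ihx ihy =>
      obtain ⟨x1, y1, z1, rfl⟩ := ihx
      obtain ⟨x2, y2, z2, rfl⟩ := ihy
      exact ⟨x1 + x2, y1 + y2, z1 + z2, by ring⟩
  · rintro ⟨x, y, z, rfl⟩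
    have ha : a ∈ AddSubmonoid.closure ({a, b, c} : Set ℕ) :=
      AddSubmonoid.subset_closure (by simp)
    have hb : b ∈ AddSubmonoid.closure ({a, b, c} : Set ℕ) :=
      AddSubmonoid.subset_closure (by simp)
    have hc : c ∈ AddSubmonoid.closure ({a, b, c} : Set ℕ) :=
      AddSubmonoid.subset_closure (by simp)
    exact add_mem (add_mem (by simpa [nsmul_eq_mul] using nsmul_mem ha x)
      (by simpa [nsmul_eq_mul] using nsmul_mem hb y))
      (by simpa [nsmul_eq_mul] using nsmul_mem hc z)

/-- Generic lemma giving `r < cb`. -/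
lemma r_lt (a b c : ℕ) (ha : 0 < a) (hc : 0 < c)
    (ca cb r r' sa sc : ℕ)
    (hmin : ∀ k, 0 < k → k * a ∈ AddSubmonoid.closure ({b, c} : Set ℕ) → ca ≤ k)
    (h1 : ca * a = r * b + r' * c)
    (h2 : cb * b = sa * a + sc * c)
    (hsa : 0 < sa) (hsc : 0 < sc) : r < cb := by
  by_contra hcon
  push_neg at hcon
  have key : ca * a = sa * a + ((r - cb) * b + (sc + r') * c) := by
    have : r * b = (r - cb) * b + cb * b := by
      rw [← add_mul, Nat.sub_add_cancel hcon]
    rw [h1, this, h2]; ring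
  have hlt : sa < ca := by
    by_contra hle
    push_neg at hle
    have h3 : ca * a ≤ sa * a := Nat.mul_le_mul_right a hle
    have hpos : 0 < (r - cb) * b + (sc + r') * c :=
      lt_of_lt_of_le (Nat.mul_pos (Nat.add_pos_left hsc r') hc) (Nat.le_add_left _ _)
    omega
  have heq : (ca - sa) * a = (r - cb) * b + (sc + r') * c := by
    have := Nat.sub_mul ca sa a
    omega
  have hmem : (ca - sa) * a ∈ AddSubmonoid.closure ({b, c} : Set ℕ) := by
    rw [heq]; exact mem_pair b c _ _
  have := hmin (ca - sa) (by omega) hmem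
  omega

/-- Generic non-membership lemma: no representation of
`(cb-1)*b + (rc-1)*c - a` exists in the semigroup. -/
lemma not_rep (a b c : ℕ) (ha : 0 < a) (hb : 0 < b) (hc : 0 < c)
    (ca cb cc rb rc : ℕ)
    (hminA : ∀ k, 0 < k → k * a ∈ AddSubmonoid.closure ({b, c} : Set ℕ) → ca ≤ k)
    (hminB : ∀ k, 0 < k → k * b ∈ AddSubmonoid.closure ({a, c} : Set ℕ) → cb ≤ k)
    (hminC : ∀ k, 0 < k → k * c ∈ AddSubmonoid.closure ({a, b} : Set ℕ) → cc ≤ k)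
    (heq : ca * a = rb * b + rc * c)
    (hrb : 0 < rb) (hrc : 0 < rc) (hrcc : rc < cc) (hcb : 0 < cb)
    (x y z : ℕ)
    (E : (x + 1) * a + y * b + z * c = (cb - 1) * b + (rc - 1) * c) : False := by
  have e1 : (rc - 1) * c + c = rc * c := by
    rw [← Nat.succ_mul]; congr 1; omega
  have e2 : (cb - 1) * b + b = cb * b := by
    rw [← Nat.succ_mul]; congr 1; omega
  have hax : a ≤ (x + 1) * a := Nat.le_mul_of_pos_left a (by omega)
  rcases le_or_gt rc z with hz | hz
  · -- z ≥ rc : a positive multiple of b lies in ⟨a,c⟩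
    have hzc : rc * c ≤ z * c := Nat.mul_le_mul_right c hz
    have hyb : y * b < (cb - 1) * b := by linarith
    have hy : y < cb - 1 := by
      by_contra hcon
      push_neg at hcon
      have : (cb - 1) * b ≤ y * b := Nat.mul_le_mul_right b hcon
      omega
    set k := cb - 1 - y with hk
    have hkb : k * b + y * b = (cb - 1) * b := by
      rw [← add_mul]; congr 1; omega
    set m := z - rc + 1 with hm
    have hmc : m * c + rc * c = z * c + c := by
      rw [← add_mul]; have : m + rc = z + 1 := by omega
      rw [this, add_mul, one_mul]
    have hkey : k * b = (x + 1) * a + m * c := by linarith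
    have hmem : k * b ∈ AddSubmonoid.closure ({a, c} : Set ℕ) := by
      rw [hkey]; exact mem_pair a c _ _
    have := hminB k (by omega) hmem
    omega
  · rcases le_or_gt cb y with hy | hy
    · -- y ≥ cb : a positive multiple of c lies in ⟨a,b⟩
      set q := rc - 1 - z with hq
      set w := y + 1 - cb with hw
      have hwb : w * b + (cb - 1) * b = y * b := by
        rw [← add_mul]; congr 1; omega
      have hqpos : 0 < q := by
        rcases Nat.eq_zero_or_pos q with h0 | h0
        · exfalso
          have h0' : z * c = (rc - 1) * c := by
            have : z = rc - 1 := by omega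
            rw [this]
          have hyb : cb * b ≤ y * b := Nat.mul_le_mul_right b hy
          linarith
        · exact h0
      have hqc : q * c + z * c = (rc - 1) * c := by
        rw [← add_mul]; congr 1; omega
      have hkey : q * c = (x + 1) * a + w * b := by linarith
      have hmem : q * c ∈ AddSubmonoid.closure ({a, b} : Set ℕ) := by
        rw [hkey]; exact mem_pair a b _ _
      have := hminC q (by omega) hmem
      omega
    · -- main case : y ≤ cb-1, z ≤ rc-1
      set u := cb - 1 - y with hu
      set v := rc - 1 - z with hv
      have hub : u * b + y * b = (cb - 1) * b := by
        rw [← add_mul]; congr 1; omega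
      have hvc : v * c + z * c = (rc - 1) * c := by
        rw [← add_mul]; congr 1; omega
      have hA : (x + 1) * a = u * b + v * c := by linarith
      have hmemA : (x + 1) * a ∈ AddSubmonoid.closure ({b, c} : Set ℕ) := by
        rw [hA]; exact mem_pair b c _ _
      have hcaA := hminA (x + 1) (by omega) hmemA
      -- subtract ca * a = rb * b + rc * c
      set s := x + 1 - ca with hs
      have hsa : s * a + ca * a = (x + 1) * a := by
        rw [← add_mul]; congr 1; omega
      -- s*a + rb*b + rc*c = u*b + v*c; and rc*c = v*c + (z+1)*c
      have hrcc' : rc * c = v * c + (z + 1) * c := by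
        rw [← add_mul]; congr 1; omega
      -- so s*a + (z+1)*c = (u - rb)*b, with u > rb
      have h5 : u * b = s * a + rb * b + (z + 1) * c := by linarith
      have hzc1 : 0 < (z + 1) * c := Nat.mul_pos (by omega) hc
      have hrbu : rb < u := by
        by_contra hcon
        push_neg at hcon
        have : u * b ≤ rb * b := Nat.mul_le_mul_right b hcon
        omega
      set t := u - rb with ht
      have htb : t * b + rb * b = u * b := by
        rw [← add_mul]; congr 1; omega
      have hkey : t * b = s * a + (z + 1) * c := by linarith
      have hmem : t * b ∈ AddSubmonoid.closure ({a, c} : Set ℕ) := by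
        rw [hkey]; exact mem_pair a c _ _
      have := hminB t (by omega) hmem
      omega

end Stmt12Aux

set_option maxHeartbeats 1000000 in
/-- with `T(S) = {g₁, g₂}`, `g₁ = g(S)`:
(i) if `g₁ = (c₂−1)n₂ + (r₁₃−1)n₃ − n₁` then
`r₁₃n₃ − r₃₁n₁ = r₂₁n₁ − r₁₂n₂ = r₃₂n₂ − r₂₃n₃ = g₁ − g₂`;
(ii) if `g₁ = (c₃−1)n₃ + (r₁₂−1)n₂ − n₁` then
`r₃₁n₁ − r₁₃n₃ = r₁₂n₂ − r₂₁n₁ = r₂₃n₃ − r₃₂n₂ = g₁ − g₂`. -/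
theorem stmt12
    (n₁ n₂ n₃ : ℕ)
    (h1 : 0 < n₁) (h12 : n₁ < n₂) (h23 : n₂ < n₃)
    (hgcd : Nat.gcd n₁ (Nat.gcd n₂ n₃) = 1)
    (hmin1 : n₁ ∉ AddSubmonoid.closure {n₂, n₃})
    (hmin2 : n₂ ∉ AddSubmonoid.closure {n₁, n₃})
    (hmin3 : n₃ ∉ AddSubmonoid.closure {n₁, n₂})
    (S : AddSubmonoid ℕ) (hS : S = AddSubmonoid.closure {n₁, n₂, n₃})
    (hnotsym : ¬ ∀ x : ℤ, ¬ S.zmem x ↔ S.zmem (frobeniusNumber S - x))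
    (c₁ c₂ c₃ : ℕ)
    (hc₁ : 0 < c₁ ∧ c₁ * n₁ ∈ AddSubmonoid.closure {n₂, n₃} ∧
      ∀ c : ℕ, 0 < c → c * n₁ ∈ AddSubmonoid.closure {n₂, n₃} → c₁ ≤ c)
    (hc₂ : 0 < c₂ ∧ c₂ * n₂ ∈ AddSubmonoid.closure {n₁, n₃} ∧
      ∀ c : ℕ, 0 < c → c * n₂ ∈ AddSubmonoid.closure {n₁, n₃} → c₂ ≤ c)
    (hc₃ : 0 < c₃ ∧ c₃ * n₃ ∈ AddSubmonoid.closure {n₁, n₂} ∧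
      ∀ c : ℕ, 0 < c → c * n₃ ∈ AddSubmonoid.closure {n₁, n₂} → c₃ ≤ c)
    (r₁₂ r₁₃ r₂₁ r₂₃ r₃₁ r₃₂ : ℕ)
    (hr₁ : 0 < r₁₂ ∧ 0 < r₁₃ ∧ c₁ * n₁ = r₁₂ * n₂ + r₁₃ * n₃)
    (hr₂ : 0 < r₂₁ ∧ 0 < r₂₃ ∧ c₂ * n₂ = r₂₁ * n₁ + r₂₃ * n₃)
    (hr₃ : 0 < r₃₁ ∧ 0 < r₃₂ ∧ c₃ * n₃ = r₃₁ * n₁ + r₃₂ * n₂)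
    (g₁ g₂ : ℤ) (hT : pseudoFrobeniusSet S = {g₁, g₂})
    (hg₁ : g₁ = frobeniusNumber S) :
    (g₁ = ((c₂ : ℤ) - 1) * n₂ + ((r₁₃ : ℤ) - 1) * n₃ - n₁ →
      (r₁₃ : ℤ) * n₃ - (r₃₁ : ℤ) * n₁ = g₁ - g₂ ∧
      (r₂₁ : ℤ) * n₁ - (r₁₂ : ℤ) * n₂ = g₁ - g₂ ∧
      (r₃₂ : ℤ) * n₂ - (r₂₃ : ℤ) * n₃ = g₁ - g₂) ∧
    (g₁ = ((c₃ : ℤ) - 1) * n₃ + ((r₁₂ : ℤ) - 1) * n₂ - n₁ →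
      (r₃₁ : ℤ) * n₁ - (r₁₃ : ℤ) * n₃ = g₁ - g₂ ∧
      (r₁₂ : ℤ) * n₂ - (r₂₁ : ℤ) * n₁ = g₁ - g₂ ∧
      (r₂₃ : ℤ) * n₃ - (r₃₂ : ℤ) * n₂ = g₁ - g₂) := by
  clear hgcd hmin1 hmin2 hmin3 hnotsym hg₁
  obtain ⟨hc₁p, hc₁m, hc₁min⟩ := hc₁
  obtain ⟨hc₂p, hc₂m, hc₂min⟩ := hc₂
  obtain ⟨hc₃p, hc₃m, hc₃min⟩ := hc₃
  obtain ⟨hr₁₂, hr₁₃, eq₁⟩ := hr₁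
  obtain ⟨hr₂₁, hr₂₃, eq₂⟩ := hr₂
  obtain ⟨hr₃₁, hr₃₂, eq₃⟩ := hr₃
  have hn₂ : 0 < n₂ := by omega
  have hn₃ : 0 < n₃ := by omega
  clear hc₁m hc₂m hc₃m h12 h23
  -- variants of the minimality hypotheses with swapped pair order
  have hc₁min' : ∀ k, 0 < k → k * n₁ ∈ AddSubmonoid.closure ({n₃, n₂} : Set ℕ) → c₁ ≤ k :=
    fun k hk hmk => hc₁min k hk (by rwa [Set.pair_comm n₃ n₂] at hmk)
  have hc₂min' : ∀ k, 0 < k → k * n₂ ∈ AddSubmonoid.closure ({n₃, n₁} : Set ℕ) → c₂ ≤ k :=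
    fun k hk hmk => hc₂min k hk (by rwa [Set.pair_comm n₃ n₁] at hmk)
  have hc₃min' : ∀ k, 0 < k → k * n₃ ∈ AddSubmonoid.closure ({n₂, n₁} : Set ℕ) → c₃ ≤ k :=
    fun k hk hmk => hc₃min k hk (by rwa [Set.pair_comm n₂ n₁] at hmk)
  -- commuted versions of the representation equations
  have eq₁' : c₁ * n₁ = r₁₃ * n₃ + r₁₂ * n₂ := by omega
  have eq₂' : c₂ * n₂ = r₂₃ * n₃ + r₂₁ * n₁ := by omega
  have eq₃' : c₃ * n₃ = r₃₂ * n₂ + r₃₁ * n₁ := by omega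
  -- the six inequalities r_{i,j} < c_j
  have h12c : r₁₂ < c₂ :=
    Stmt12Aux.r_lt n₁ n₂ n₃ h1 hn₃ c₁ c₂ r₁₂ r₁₃ r₂₁ r₂₃ hc₁min eq₁ eq₂ hr₂₁ hr₂₃
  have h13c : r₁₃ < c₃ :=
    Stmt12Aux.r_lt n₁ n₃ n₂ h1 hn₂ c₁ c₃ r₁₃ r₁₂ r₃₁ r₃₂ hc₁min' eq₁' eq₃ hr₃₁ hr₃₂
  have h21c : r₂₁ < c₁ :=
    Stmt12Aux.r_lt n₂ n₁ n₃ hn₂ hn₃ c₂ c₁ r₂₁ r₂₃ r₁₂ r₁₃ hc₂min eq₂ eq₁ hr₁₂ hr₁₃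
  have h23c : r₂₃ < c₃ :=
    Stmt12Aux.r_lt n₂ n₃ n₁ hn₂ h1 c₂ c₃ r₂₃ r₂₁ r₃₂ r₃₁ hc₂min' eq₂' eq₃' hr₃₂ hr₃₁
  have h31c : r₃₁ < c₁ :=
    Stmt12Aux.r_lt n₃ n₁ n₂ hn₃ hn₂ c₃ c₁ r₃₁ r₃₂ r₁₃ r₁₂ hc₃min eq₃ eq₁' hr₁₃ hr₁₂
  have h32c : r₃₂ < c₂ :=
    Stmt12Aux.r_lt n₃ n₂ n₁ hn₃ h1 c₃ c₂ r₃₂ r₃₁ r₂₃ r₂₁ hc₃min' eq₃' eq₂' hr₂₃ hr₂₁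
  -- the key relations cᵢ = r_{j,i} + r_{k,i}
  have le₁ : c₁ ≤ r₂₁ + r₃₁ := by
    have t1 : (c₂ - r₃₂) * n₂ + r₃₂ * n₂ = c₂ * n₂ := by
      rw [← add_mul]; congr 1; omega
    have t2 : (c₃ - r₂₃) * n₃ + r₂₃ * n₃ = c₃ * n₃ := by
      rw [← add_mul]; congr 1; omega
    have t3 : (r₂₁ + r₃₁) * n₁ = r₂₁ * n₁ + r₃₁ * n₁ := add_mul _ _ _
    have e : (c₂ - r₃₂) * n₂ + (c₃ - r₂₃) * n₃ = (r₂₁ + r₃₁) * n₁ := by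
      linarith only [t1, t2, t3, eq₂, eq₃]
    exact hc₁min (r₂₁ + r₃₁) (by omega) (e ▸ Stmt12Aux.mem_pair n₂ n₃ _ _)
  have le₂ : c₂ ≤ r₁₂ + r₃₂ := by
    have t1 : (c₁ - r₃₁) * n₁ + r₃₁ * n₁ = c₁ * n₁ := by
      rw [← add_mul]; congr 1; omega
    have t2 : (c₃ - r₁₃) * n₃ + r₁₃ * n₃ = c₃ * n₃ := by
      rw [← add_mul]; congr 1; omega
    have t3 : (r₁₂ + r₃₂) * n₂ = r₁₂ * n₂ + r₃₂ * n₂ := add_mul _ _ _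
    have e : (c₁ - r₃₁) * n₁ + (c₃ - r₁₃) * n₃ = (r₁₂ + r₃₂) * n₂ := by
      linarith only [t1, t2, t3, eq₁, eq₃]
    exact hc₂min (r₁₂ + r₃₂) (by omega) (e ▸ Stmt12Aux.mem_pair n₁ n₃ _ _)
  have le₃ : c₃ ≤ r₁₃ + r₂₃ := by
    have t1 : (c₁ - r₂₁) * n₁ + r₂₁ * n₁ = c₁ * n₁ := by
      rw [← add_mul]; congr 1; omega
    have t2 : (c₂ - r₁₂) * n₂ + r₁₂ * n₂ = c₂ * n₂ := by
      rw [← add_mul]; congr 1; omega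
    have t3 : (r₁₃ + r₂₃) * n₃ = r₁₃ * n₃ + r₂₃ * n₃ := add_mul _ _ _
    have e : (c₁ - r₂₁) * n₁ + (c₂ - r₁₂) * n₂ = (r₁₃ + r₂₃) * n₃ := by
      linarith only [t1, t2, t3, eq₁, eq₂]
    exact hc₃min (r₁₃ + r₂₃) (by omega) (e ▸ Stmt12Aux.mem_pair n₁ n₂ _ _)
  have hA₁ : c₁ = r₂₁ + r₃₁ ∧ c₂ = r₁₂ + r₃₂ ∧ c₃ = r₁₃ + r₂₃ := by
    have m1 : c₁ * n₁ ≤ (r₂₁ + r₃₁) * n₁ := Nat.mul_le_mul_right n₁ le₁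
    have m2 : c₂ * n₂ ≤ (r₁₂ + r₃₂) * n₂ := Nat.mul_le_mul_right n₂ le₂
    have m3 : c₃ * n₃ ≤ (r₁₃ + r₂₃) * n₃ := Nat.mul_le_mul_right n₃ le₃
    have t1 : (r₂₁ + r₃₁) * n₁ = r₂₁ * n₁ + r₃₁ * n₁ := add_mul _ _ _
    have t2 : (r₁₂ + r₃₂) * n₂ = r₁₂ * n₂ + r₃₂ * n₂ := add_mul _ _ _
    have t3 : (r₁₃ + r₂₃) * n₃ = r₁₃ * n₃ + r₂₃ * n₃ := add_mul _ _ _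
    have hs : c₁ * n₁ + c₂ * n₂ + c₃ * n₃ =
        (r₂₁ + r₃₁) * n₁ + (r₁₂ + r₃₂) * n₂ + (r₁₃ + r₂₃) * n₃ := by
      linarith only [eq₁, eq₂, eq₃, t1, t2, t3]
    have e1 : c₁ * n₁ = (r₂₁ + r₃₁) * n₁ := by linarith only [hs, m1, m2, m3]
    have e2 : c₂ * n₂ = (r₁₂ + r₃₂) * n₂ := by linarith only [hs, m1, m2, m3]
    have e3 : c₃ * n₃ = (r₁₃ + r₂₃) * n₃ := by linarith only [hs, m1, m2, m3]
    exact ⟨Nat.eq_of_mul_eq_mul_right h1 e1, Nat.eq_of_mul_eq_mul_right hn₂ e2,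
      Nat.eq_of_mul_eq_mul_right hn₃ e3⟩
  obtain ⟨hA₁, hA₂, hA₃⟩ := hA₁
  -- casts of the equations to ℤ
  have Z₁ : (c₁ : ℤ) * n₁ = (r₁₂ : ℤ) * n₂ + (r₁₃ : ℤ) * n₃ := by exact_mod_cast eq₁
  have Z₂ : (c₂ : ℤ) * n₂ = (r₂₁ : ℤ) * n₁ + (r₂₃ : ℤ) * n₃ := by exact_mod_cast eq₂
  have Z₃ : (c₃ : ℤ) * n₃ = (r₃₁ : ℤ) * n₁ + (r₃₂ : ℤ) * n₂ := by exact_mod_cast eq₃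
  have ZA₂ : (c₂ : ℤ) = (r₁₂ : ℤ) + (r₃₂ : ℤ) := by exact_mod_cast congrArg (Nat.cast : ℕ → ℤ) hA₂
  have ZA₃ : (c₃ : ℤ) = (r₁₃ : ℤ) + (r₂₃ : ℤ) := by exact_mod_cast congrArg (Nat.cast : ℕ → ℤ) hA₃
  have ZB₂ : (c₂ : ℤ) * n₂ = (r₁₂ : ℤ) * n₂ + (r₃₂ : ℤ) * n₂ := by rw [ZA₂]; ring
  have ZB₃ : (c₃ : ℤ) * n₃ = (r₁₃ : ℤ) * n₃ + (r₂₃ : ℤ) * n₃ := by rw [ZA₃]; ring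
  -- membership criterion
  have hzmem : ∀ x : ℤ, S.zmem x ↔ ∃ p q r : ℕ, ((p * n₁ + q * n₂ + r * n₃ : ℕ) : ℤ) = x := by
    intro x
    constructor
    · rintro ⟨m, hm, rfl⟩
      rw [hS, Stmt12Aux.mem_triple_iff] at hm
      obtain ⟨p, q, r, rfl⟩ := hm
      exact ⟨p, q, r, rfl⟩
    · rintro ⟨p, q, r, rfl⟩
      exact ⟨_, by rw [hS, Stmt12Aux.mem_triple_iff]; exact ⟨p, q, r, rfl⟩, rfl⟩
  -- the pseudo-Frobenius step lemma
  have hstep : ∀ f : ℤ, S.zmem (f + n₁) → S.zmem (f + n₂) → S.zmem (f + n₃) →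
      ∀ s ∈ S, s ≠ 0 → S.zmem (f + s) := by
    intro f hf1 hf2 hf3 s hsS hsne
    rw [hS] at hsS
    have key : s = 0 ∨ S.zmem (f + s) := by
      clear hsne
      induction hsS using AddSubmonoid.closure_induction with
      | mem x hx =>
        rcases hx with h | h | h
        · right; rw [h]; exact hf1
        · right; rw [h]; exact hf2
        · right; simp only [Set.mem_singleton_iff] at h; rw [h]; exact hf3
      | zero => left; rfl
      | add x y hx hy ihx ihy =>
        rcases ihx with rfl | hzx
        · simpa using ihy
        · right
          obtain ⟨m, hmS, hmz⟩ := hzx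
          refine ⟨m + y, add_mem hmS (hS ▸ hy), ?_⟩
          push_cast
          push_cast at hmz
          linarith only [hmz]
    tauto
  -- abbreviations for the two candidate pseudo-Frobenius numbers
  set f₁ : ℤ := ((c₃ : ℤ) - 1) * n₃ + ((r₁₂ : ℤ) - 1) * n₂ - n₁ with hf₁def
  set f₂ : ℤ := ((c₂ : ℤ) - 1) * n₂ + ((r₁₃ : ℤ) - 1) * n₃ - n₁ with hf₂def
  -- useful cast facts about truncated subtractions
  have ec₂ : ((c₂ - 1 : ℕ) : ℤ) = (c₂ : ℤ) - 1 := by omega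
  have ec₃ : ((c₃ - 1 : ℕ) : ℤ) = (c₃ : ℤ) - 1 := by omega
  have er₁₂ : ((r₁₂ - 1 : ℕ) : ℤ) = (r₁₂ : ℤ) - 1 := by omega
  have er₁₃ : ((r₁₃ - 1 : ℕ) : ℤ) = (r₁₃ : ℤ) - 1 := by omega
  -- f₂ ∈ T(S)
  have hf₂T : f₂ ∈ pseudoFrobeniusSet S := by
    constructor
    · intro hmem
      rw [hzmem] at hmem
      obtain ⟨p, q, r, hpqr⟩ := hmem
      refine Stmt12Aux.not_rep n₁ n₂ n₃ h1 hn₂ hn₃ c₁ c₂ c₃ r₁₂ r₁₃ hc₁min hc₂min hc₃min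
        eq₁ hr₁₂ hr₁₃ h13c hc₂p p q r ?_
      have EZ : (((p + 1) * n₁ + q * n₂ + r * n₃ : ℕ) : ℤ) =
          (((c₂ - 1) * n₂ + (r₁₃ - 1) * n₃ : ℕ) : ℤ) := by
        push_cast [ec₂, er₁₃]
        push_cast at hpqr
        rw [hf₂def] at hpqr
        linarith only [hpqr]
      exact_mod_cast EZ
    · intro s hsS hsne
      refine hstep f₂ ?_ ?_ ?_ s hsS hsne
      · rw [hzmem]
        refine ⟨0, c₂ - 1, r₁₃ - 1, ?_⟩
        push_cast [ec₂, er₁₃]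
        rw [hf₂def]; ring
      · rw [hzmem]
        refine ⟨r₂₁ - 1, 0, r₂₃ + r₁₃ - 1, ?_⟩
        have e1 : ((r₂₁ - 1 : ℕ) : ℤ) = (r₂₁ : ℤ) - 1 := by omega
        have e2 : ((r₂₃ + r₁₃ - 1 : ℕ) : ℤ) = (r₂₃ : ℤ) + r₁₃ - 1 := by omega
        push_cast [e1, e2]
        rw [hf₂def]
        linarith only [Z₂]
      · rw [hzmem]
        refine ⟨c₁ - 1, c₂ - 1 - r₁₂, 0, ?_⟩
        have e1 : ((c₁ - 1 : ℕ) : ℤ) = (c₁ : ℤ) - 1 := by omega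
        have e2 : ((c₂ - 1 - r₁₂ : ℕ) : ℤ) = (c₂ : ℤ) - 1 - r₁₂ := by omega
        push_cast [e1, e2]
        rw [hf₂def]
        linarith only [Z₁]
  -- f₁ ∈ T(S)
  have hf₁T : f₁ ∈ pseudoFrobeniusSet S := by
    constructor
    · intro hmem
      rw [hzmem] at hmem
      obtain ⟨p, q, r, hpqr⟩ := hmem
      refine Stmt12Aux.not_rep n₁ n₃ n₂ h1 hn₃ hn₂ c₁ c₃ c₂ r₁₃ r₁₂ hc₁min' hc₃min hc₂min
        eq₁' hr₁₃ hr₁₂ h12c hc₃p p r q ?_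
      have EZ : (((p + 1) * n₁ + r * n₃ + q * n₂ : ℕ) : ℤ) =
          (((c₃ - 1) * n₃ + (r₁₂ - 1) * n₂ : ℕ) : ℤ) := by
        push_cast [ec₃, er₁₂]
        push_cast at hpqr
        rw [hf₁def] at hpqr
        linarith only [hpqr]
      exact_mod_cast EZ
    · intro s hsS hsne
      refine hstep f₁ ?_ ?_ ?_ s hsS hsne
      · rw [hzmem]
        refine ⟨0, r₁₂ - 1, c₃ - 1, ?_⟩
        push_cast [ec₃, er₁₂]
        rw [hf₁def]; ring
      · rw [hzmem]
        refine ⟨c₁ - 1, 0, c₃ - 1 - r₁₃, ?_⟩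
        have e1 : ((c₁ - 1 : ℕ) : ℤ) = (c₁ : ℤ) - 1 := by omega
        have e2 : ((c₃ - 1 - r₁₃ : ℕ) : ℤ) = (c₃ : ℤ) - 1 - r₁₃ := by omega
        push_cast [e1, e2]
        rw [hf₁def]
        linarith only [Z₁]
      · rw [hzmem]
        refine ⟨r₃₁ - 1, r₃₂ + r₁₂ - 1, 0, ?_⟩
        have e1 : ((r₃₁ - 1 : ℕ) : ℤ) = (r₃₁ : ℤ) - 1 := by omega
        have e2 : ((r₃₂ + r₁₂ - 1 : ℕ) : ℤ) = (r₃₂ : ℤ) + r₁₂ - 1 := by omega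
        push_cast [e1, e2]
        rw [hf₁def]
        linarith only [Z₃]
  -- f₁ ≠ f₂
  have hne : f₁ ≠ f₂ := by
    intro hcon
    rw [hf₁def, hf₂def] at hcon
    have hz : (r₃₂ : ℤ) * n₂ = (r₂₃ : ℤ) * n₃ := by
      have h' : ((c₂ : ℤ) - r₁₂) * n₂ = ((c₃ : ℤ) - r₁₃) * n₃ := by linarith only [hcon]
      rw [ZA₂, ZA₃] at h'
      linarith only [h']
    have hn : r₃₂ * n₂ = r₂₃ * n₃ := by exact_mod_cast hz
    have hr31 : r₃₁ * n₁ = r₁₃ * n₃ := by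
      have t3 : (r₁₃ + r₂₃) * n₃ = r₁₃ * n₃ + r₂₃ * n₃ := add_mul _ _ _
      have heq3 := eq₃
      rw [hA₃] at heq3
      linarith only [heq3, t3, hn]
    have hmem : r₃₁ * n₁ ∈ AddSubmonoid.closure ({n₂, n₃} : Set ℕ) := by
      rw [hr31]
      have := Stmt12Aux.mem_pair n₂ n₃ 0 r₁₃
      simpa using this
    have := hc₁min r₃₁ hr₃₁ hmem
    omega
  constructor
  · -- case (i)
    intro hg
    have hf1mem : f₁ ∈ ({g₁, g₂} : Set ℤ) := hT ▸ hf₁T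
    rcases hf1mem with h | h
    · exact absurd (h.trans hg) hne
    · simp only [Set.mem_singleton_iff] at h
      rw [hg, ← h, hf₁def, hf₂def]
      exact ⟨by linarith only [Z₃, ZB₂], by linarith only [Z₂, ZB₃],
        by linarith only [ZB₂, ZB₃]⟩
  · -- case (ii)
    intro hg
    have hf2mem : f₂ ∈ ({g₁, g₂} : Set ℤ) := hT ▸ hf₂T
    rcases hf2mem with h | h
    · exact absurd (h.trans hg).symm hne
    · simp only [Set.mem_singleton_iff] at h
      rw [hg, ← h, hf₁def, hf₂def]
      exact ⟨by linarith only [Z₃, ZB₂], by linarith only [Z₂, ZB₃],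
        by linarith only [ZB₂, ZB₃]⟩
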